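/- arXiv:1208.2794 — 3 statements merged into one kernel-verified Lean document; each statement's English description precedes it below -/
import Mathlib

section
/- The closed unit ball is invariant under the flow of the controlled Kossakowsky–Lindblad system dx/dt = -Γx + u₂z, dy/dt = -Γy - u₁z, dz/dt = γ₋ - γ₊z + u₁y - u₂x: if the dissipative parameters satisfy 2Γ ≥ γ₊ ≥ |γ₋|, then any solution with |q(0)| ≤ 1 satisfies |q(t)| ≤ 1 for all t ≥ 0. -/
/-- The closed unit ball is invariant under the flow of the controlled
Kossakowsky–Lindblad system. -/
theorem bloch_ball_invariant
    (Γ γp γm : ℝ) (hΓ : γp ≤ 2 * Γ) (hγ : |γm| ≤ γp)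
    (u₁ u₂ : ℝ → ℝ) (x y z : ℝ → ℝ)
    (hx : ∀ t ∈ Set.Ici (0:ℝ), HasDerivAt x (-Γ * x t + u₂ t * z t) t)
    (hy : ∀ t ∈ Set.Ici (0:ℝ), HasDerivAt y (-Γ * y t - u₁ t * z t) t)
    (hz : ∀ t ∈ Set.Ici (0:ℝ),
      HasDerivAt z (γm - γp * z t + u₁ t * y t - u₂ t * x t) t)
    (h0 : x 0 ^ 2 + y 0 ^ 2 + z 0 ^ 2 ≤ 1) :
    ∀ t ∈ Set.Ici (0:ℝ), x t ^ 2 + y t ^ 2 + z t ^ 2 ≤ 1 := by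
  obtain ⟨hm1, hm2⟩ := abs_le.mp hγ
  set g : ℝ → ℝ := fun s => (x s ^ 2 + y s ^ 2 + z s ^ 2 - 1) * Real.exp (γp * s)
    with hg_def
  have hcont : ContinuousOn g (Set.Ici 0) := by
    apply ContinuousOn.mul
    · apply ContinuousOn.sub _ continuousOn_const
      apply ContinuousOn.add
      apply ContinuousOn.add
      · exact fun s hs => ((hx s hs).continuousAt.pow 2).continuousWithinAt
      · exact fun s hs => ((hy s hs).continuousAt.pow 2).continuousWithinAt
      · exact fun s hs => ((hz s hs).continuousAt.pow 2).continuousWithinAt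
    · exact (Real.continuous_exp.comp (continuous_const.mul continuous_id)).continuousOn
  have hgd : ∀ s ∈ Set.Ioi (0:ℝ), HasDerivAt g
      ((2 * x s * (-Γ * x s + u₂ s * z s) + 2 * y s * (-Γ * y s - u₁ s * z s)
        + 2 * z s * (γm - γp * z s + u₁ s * y s - u₂ s * x s)) * Real.exp (γp * s)
        + (x s ^ 2 + y s ^ 2 + z s ^ 2 - 1) * (Real.exp (γp * s) * (γp * 1))) s := by
    intro s hs
    have hs' : s ∈ Set.Ici (0:ℝ) := Set.mem_Ici.mpr (le_of_lt (Set.mem_Ioi.mp hs))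
    have hW : HasDerivAt (fun s => x s ^ 2 + y s ^ 2 + z s ^ 2 - 1)
        (2 * x s * (-Γ * x s + u₂ s * z s) + 2 * y s * (-Γ * y s - u₁ s * z s)
          + 2 * z s * (γm - γp * z s + u₁ s * y s - u₂ s * x s)) s := by
      have h1 := ((hx s hs').fun_pow 2)
      have h2 := ((hy s hs').fun_pow 2)
      have h3 := ((hz s hs').fun_pow 2)
      simp only [Nat.cast_ofNat, Nat.reduceSub, pow_one] at h1 h2 h3
      have := ((h1.fun_add h2).fun_add h3).sub_const 1
      convert this using 1
    have he : HasDerivAt (fun s => Real.exp (γp * s)) (Real.exp (γp * s) * (γp * 1)) s :=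
      ((hasDerivAt_id s).const_mul γp).exp
    have hg : HasDerivAt g
        ((2 * x s * (-Γ * x s + u₂ s * z s) + 2 * y s * (-Γ * y s - u₁ s * z s)
          + 2 * z s * (γm - γp * z s + u₁ s * y s - u₂ s * x s)) * Real.exp (γp * s)
          + (x s ^ 2 + y s ^ 2 + z s ^ 2 - 1) * (Real.exp (γp * s) * (γp * 1))) s :=
      hW.mul he
    exact hg
  have hanti : AntitoneOn g (Set.Ici 0) := by
    apply antitoneOn_of_deriv_nonpos (convex_Ici 0) hcont
    · intro s hs
      rw [interior_Ici] at hs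
      exact (hgd s hs).differentiableAt.differentiableWithinAt
    intro s hs
    rw [interior_Ici] at hs
    rw [(hgd s hs).deriv]
    have hexp : (0:ℝ) ≤ Real.exp (γp * s) := (Real.exp_pos _).le
    have key : 2 * x s * (-Γ * x s + u₂ s * z s) + 2 * y s * (-Γ * y s - u₁ s * z s)
        + 2 * z s * (γm - γp * z s + u₁ s * y s - u₂ s * x s)
        + (x s ^ 2 + y s ^ 2 + z s ^ 2 - 1) * γp ≤ 0 := by
      nlinarith [mul_nonneg (by linarith : (0:ℝ) ≤ γp + γm) (sq_nonneg (z s - 1)),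
        mul_nonneg (by linarith : (0:ℝ) ≤ γp - γm) (sq_nonneg (z s + 1)),
        mul_nonneg (by linarith : (0:ℝ) ≤ 2 * Γ - γp) (sq_nonneg (x s)),
        mul_nonneg (by linarith : (0:ℝ) ≤ 2 * Γ - γp) (sq_nonneg (y s))]
    nlinarith [mul_nonpos_of_nonpos_of_nonneg key hexp]
  intro t ht
  have := hanti (Set.self_mem_Ici) ht ht
  simp only [hg_def, mul_zero, Real.exp_zero, mul_one] at this
  have hexp : (0:ℝ) < Real.exp (γp * t) := Real.exp_pos _
  nlinarith [this, h0]
end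

section
/- For the 2D single-spin system, the singular set S = {q ∈ ℝ² : det(F₁(q), [F₁,F₀](q)) = 0} equals the union of the line y = 0 and, when δ ≠ 0, the horizontal line z = γ/(2δ); indeed det(F₁, [F₁,F₀]) = -y(-2δz + γ) up to sign, i.e., the determinant vanishes iff y(γ - 2δz) = 0. -/
/-- 2×2 determinant of the matrix with columns `v`, `w`. -/
def det2 (v w : ℝ × ℝ) : ℝ := v.1 * w.2 - v.2 * w.1

/-- The singular set `det(F₁,[F₁,F₀]) = 0` of the single-spin system is the union of
the axis `y = 0` and (for `δ ≠ 0`) the horizontal line `z = γ/(2δ)`. -/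
theorem single_spin_singular_set (Γ γ : ℝ) (δ : ℝ) (hδ : δ = γ - Γ)
    (F₁ brk : ℝ × ℝ → ℝ × ℝ)
    (hF₁ : F₁ = fun q => (-q.2, q.1))
    (hbrk : brk = fun q => (-γ + δ * q.2, δ * q.1)) :
    (∀ q : ℝ × ℝ, det2 (F₁ q) (brk q) = 0 ↔ q.1 * (γ - 2 * δ * q.2) = 0) ∧
    (δ ≠ 0 →
      {q : ℝ × ℝ | det2 (F₁ q) (brk q) = 0} =
        {q : ℝ × ℝ | q.1 = 0} ∪ {q : ℝ × ℝ | q.2 = γ / (2 * δ)}) := by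
  subst hF₁ hbrk
  have key : ∀ q : ℝ × ℝ, det2 ((-q.2, q.1)) ((-γ + δ * q.2, δ * q.1)) = q.1 * (γ - 2 * δ * q.2) := by
    intro q; simp [det2]; ring
  constructor
  · intro q
    rw [key q]
  · intro hδ0
    ext q
    simp only [Set.mem_setOf_eq, Set.mem_union, key q, mul_eq_zero]
    constructor
    · rintro (h | h)
      · exact Or.inl h
      · right; field_simp; linarith
    · rintro (h | h)
      · exact Or.inl h
      · right; rw [h]; field_simp; ring
end

section
/- If γ ≠ 0 and 0 < 2Γ - γ, the singular control along the horizontal singular line is integrable (L¹) but not square-integrable (L²) near y = 0: for the flow ẏ = -Γy - γ²(2Γ-γ)/(4δ²y) reaching y = 0 from y₀ < 0 in finite time t₁, the integral ∫ |u₁s(t)| dt is finite while ∫ u₁s(t)² dt diverges, since u₁s(t)²·(dy/dt)⁻¹ scales as 1/y as y → 0. -/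
open MeasureTheory

/-- The singular control along the horizontal singular line is `L¹` but not `L²`
near `y = 0`: along the flow `ẏ = -Γy - γ²(2Γ-γ)/(4δ²y)` reaching `y = 0`
at finite time `t₁`, `∫|u₁s| < ∞` while `∫ u₁s² = ∞`. -/
theorem singular_control_L1_not_L2 (Γ γ : ℝ) (hγ : 0 < γ) (hΓγ : γ < Γ)
    (δ : ℝ) (hδ : δ = γ - Γ) (k : ℝ) (hk : k = γ * (2 * Γ - γ) / (2 * δ))
    (y : ℝ → ℝ) (t₁ : ℝ) (ht₁ : 0 < t₁)
    (hyneg : ∀ t ∈ Set.Ico (0:ℝ) t₁, y t < 0) (hy1 : y t₁ = 0)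
    (hode : ∀ t ∈ Set.Ico (0:ℝ) t₁,
      HasDerivAt y (-Γ * y t - γ ^ 2 * (2 * Γ - γ) / (4 * δ ^ 2 * y t)) t)
    (hcont : ContinuousOn y (Set.Icc 0 t₁)) :
    IntegrableOn (fun t => |k / y t|) (Set.Ico 0 t₁) ∧
    ¬ IntegrableOn (fun t => (k / y t) ^ 2) (Set.Ico 0 t₁) := by
  have hδneg : δ < 0 := by rw [hδ]; linarith
  have hδne : δ ≠ 0 := ne_of_lt hδneg
  have h2 : 0 < 2 * Γ - γ := by linarith
  set c : ℝ := γ ^ 2 * (2 * Γ - γ) / (4 * δ ^ 2) with hc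
  have hcpos : 0 < c := by
    apply div_pos (by positivity) (by positivity)
  have hkne : k ≠ 0 := by
    rw [hk]
    exact div_ne_zero (by positivity) (by simp [hδne])
  have hk2 : 0 < k ^ 2 := by positivity
  -- the derivative function
  set Df : ℝ → ℝ := fun s => -Γ * y s - c / y s with hDf
  have hode' : ∀ t ∈ Set.Ico (0:ℝ) t₁, HasDerivAt y (Df t) t := by
    intro t ht
    have := hode t ht
    have heq : γ ^ 2 * (2 * Γ - γ) / (4 * δ ^ 2 * y t) = c / y t := by
      rw [hc, div_div]
    rwa [heq] at this
  have hy0 := hyneg 0 ⟨le_refl _, ht₁⟩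
  set M : ℝ := -y 0 with hM
  have hMpos : 0 < M := by simpa [hM] using hy0
  -- monotonicity: y 0 ≤ y t on [0, t₁)
  have hmono : ∀ t ∈ Set.Ico (0:ℝ) t₁, y 0 ≤ y t := by
    intro t ht
    rcases eq_or_lt_of_le ht.1 with h | h
    · rw [← h]
    have hsub : Set.Icc (0:ℝ) t ⊆ Set.Ico 0 t₁ := fun s hs => ⟨hs.1, lt_of_le_of_lt hs.2 ht.2⟩
    have hmo : StrictMonoOn y (Set.Icc 0 t) := by
      apply strictMonoOn_of_deriv_pos (convex_Icc 0 t)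
        (hcont.mono (fun s hs => ⟨hs.1, le_trans hs.2 (le_of_lt ht.2)⟩))
      intro s hs
      rw [interior_Icc] at hs
      have hs' : s ∈ Set.Ico (0:ℝ) t₁ := hsub ⟨le_of_lt hs.1, le_of_lt hs.2⟩
      rw [(hode' s hs').deriv]
      have hys := hyneg s hs'
      have h1 : 0 < -Γ * y s := by nlinarith
      have h2' : c / y s < 0 := div_neg_of_pos_of_neg hcpos hys
      simp only [hDf]
      linarith
    exact (hmo.monotoneOn) ⟨le_refl 0, le_of_lt h⟩ ⟨ht.1, le_refl t⟩ ht.1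
  -- bounds on the derivative
  have hDlb : ∀ t ∈ Set.Ico (0:ℝ) t₁, c / (-y t) ≤ Df t := by
    intro t ht
    have hyt := hyneg t ht
    have h1 : 0 ≤ -Γ * y t := by nlinarith
    have : c / (-y t) = -(c / y t) := by rw [div_neg]
    simp only [hDf]; rw [this]; linarith
  set C : ℝ := Γ * M ^ 2 + c with hC
  have hCpos : 0 < C := by nlinarith [sq_nonneg M]
  have hDub : ∀ t ∈ Set.Ico (0:ℝ) t₁, Df t ≤ C / (-y t) := by
    intro t ht
    have hyt := hyneg t ht
    have hyt' : 0 < -y t := by linarith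
    have hytM : -y t ≤ M := by have := hmono t ht; simp only [hM]; linarith
    have heq : Df t = (Γ * (y t) ^ 2 + c) / (-y t) := by
      field_simp [hDf, ne_of_lt hyt]
      simp only [hDf]; rw [sub_mul, div_mul_cancel₀ _ (ne_of_lt hyt)]; ring
    rw [heq, div_le_div_iff_of_pos_right hyt']
    nlinarith [mul_nonneg (show (0:ℝ) ≤ M + y t by linarith) (show (0:ℝ) ≤ M - y t by linarith)]
  -- continuity on compact subintervals
  have hsubIcc : ∀ t ∈ Set.Ico (0:ℝ) t₁, Set.Icc (0:ℝ) t ⊆ Set.Ico 0 t₁ :=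
    fun t ht s hs => ⟨hs.1, lt_of_le_of_lt hs.2 ht.2⟩
  have hycont : ∀ t ∈ Set.Ico (0:ℝ) t₁, ContinuousOn y (Set.Icc 0 t) := fun t ht =>
    hcont.mono (fun s hs => ⟨hs.1, le_trans hs.2 ht.2.le⟩)
  have hyne : ∀ t ∈ Set.Ico (0:ℝ) t₁, ∀ s ∈ Set.Icc (0:ℝ) t, y s ≠ 0 :=
    fun t ht s hs => ne_of_lt (hyneg s (hsubIcc t ht hs))
  have hDfcont : ∀ t ∈ Set.Ico (0:ℝ) t₁, ContinuousOn Df (Set.Icc 0 t) := fun t ht =>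
    (continuousOn_const.mul (hycont t ht)).sub
      (continuousOn_const.div (hycont t ht) (hyne t ht))
  -- fundamental theorem of calculus for y
  have hFTC : ∀ t ∈ Set.Ico (0:ℝ) t₁, ∫ s in (0:ℝ)..t, Df s = y t - y 0 := by
    intro t ht
    apply intervalIntegral.integral_eq_sub_of_hasDerivAt
    · intro s hs
      rw [Set.uIcc_of_le ht.1] at hs
      exact hode' s (hsubIcc t ht hs)
    · apply ContinuousOn.intervalIntegrable
      rw [Set.uIcc_of_le ht.1]
      exact hDfcont t ht
  -- the approximating sequence
  set b : ℕ → ℝ := fun n => t₁ - t₁ / (n + 1) with hb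
  have hbmem : ∀ n, b n ∈ Set.Ico (0:ℝ) t₁ := by
    intro n
    have h1 : t₁ / ((n:ℝ) + 1) ≤ t₁ := by
      apply div_le_self ht₁.le
      have : (0:ℝ) ≤ (n:ℝ) := Nat.cast_nonneg n
      linarith
    have h2' : (0:ℝ) < t₁ / ((n:ℝ) + 1) := by positivity
    exact ⟨by simp only [hb]; linarith, by simp only [hb]; linarith⟩
  have hbt : Filter.Tendsto b Filter.atTop (nhds t₁) := by
    have h0 : Filter.Tendsto (fun n : ℕ => t₁ / ((n:ℝ) + 1)) Filter.atTop (nhds 0) := by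
      simpa [mul_one_div, div_eq_mul_inv] using tendsto_one_div_add_atTop_nhds_zero_nat.const_mul t₁
    simpa using tendsto_const_nhds.sub h0
  -- Part 1: L¹
  have hf1cont : ∀ t ∈ Set.Ico (0:ℝ) t₁, ContinuousOn (fun s => |k / y s|) (Set.Icc 0 t) :=
    fun t ht => (continuousOn_const.div (hycont t ht) (hyne t ht)).abs
  have hf1int : ∀ n, IntegrableOn (fun s => |k / y s|) (Set.Ioc 0 (b n)) := fun n =>
    ((hf1cont _ (hbmem n)).integrableOn_Icc).mono_set Set.Ioc_subset_Icc_self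
  have hle : ∀ t ∈ Set.Ico (0:ℝ) t₁, ∀ s ∈ Set.Icc (0:ℝ) t, |k / y s| ≤ |k| / c * Df s := by
    intro t ht s hs
    have hs' := hsubIcc t ht hs
    have hys := hyneg s hs'
    have hys' : 0 < -y s := by linarith
    have h3 := hDlb s hs'
    have h5 : c ≤ Df s * (-y s) := (div_le_iff₀ hys').mp h3
    rw [abs_div, abs_of_neg hys, div_le_iff₀ hys']
    nlinarith [mul_le_mul_of_nonneg_left h5 (show (0:ℝ) ≤ |k| / c by positivity),
      div_mul_cancel₀ |k| (ne_of_gt hcpos)]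
  have hbound : ∀ n, (∫ x in Set.Ioc 0 (b n), ‖|k / y x|‖) ≤ |k| / c * M := by
    intro n
    have hbn := hbmem n
    have int2 : IntervalIntegrable (fun s => |k| / c * Df s) volume 0 (b n) := by
      apply ContinuousOn.intervalIntegrable
      rw [Set.uIcc_of_le hbn.1]
      exact continuousOn_const.mul (hDfcont _ hbn)
    have int1 : IntervalIntegrable (fun s => |k / y s|) volume 0 (b n) := by
      apply ContinuousOn.intervalIntegrable
      rw [Set.uIcc_of_le hbn.1]
      exact hf1cont _ hbn
    have e0 : (∫ x in Set.Ioc 0 (b n), ‖|k / y x|‖) = ∫ s in (0:ℝ)..(b n), |k / y s| := by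
      rw [intervalIntegral.integral_of_le hbn.1]
      simp [Real.norm_eq_abs, abs_abs]
    rw [e0]
    calc ∫ s in (0:ℝ)..(b n), |k / y s|
        ≤ ∫ s in (0:ℝ)..(b n), |k| / c * Df s := by
          apply intervalIntegral.integral_mono_on hbn.1 int1 int2
          exact hle _ hbn
      _ = |k| / c * (y (b n) - y 0) := by
          rw [intervalIntegral.integral_const_mul, hFTC _ hbn]
      _ ≤ |k| / c * M := by
          apply mul_le_mul_of_nonneg_left _ (by positivity)
          have := hyneg _ hbn
          simp only [hM]; linarith
  have hIoc : IntegrableOn (fun s => |k / y s|) (Set.Ioc 0 t₁) :=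
    integrableOn_Ioc_of_intervalIntegral_norm_bounded_right hf1int hbt
      (Filter.Eventually.of_forall hbound)
  have part1 : IntegrableOn (fun t => |k / y t|) (Set.Ico 0 t₁) := by
    rw [integrableOn_Ico_iff_integrableOn_Ioo]
    exact hIoc.mono_set Set.Ioo_subset_Ioc_self
  refine ⟨part1, ?_⟩
  -- Part 2: not L²
  intro hint
  set C' : ℝ := C / k ^ 2 with hC'
  have hC'pos : 0 < C' := div_pos hCpos hk2
  have hg : ∀ s ∈ Set.Ico (0:ℝ) t₁, HasDerivAt (fun u => Real.log (-y u)) (Df s / y s) s := by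
    intro s hs
    have h1 : HasDerivAt (fun u => -y u) (-Df s) s := (hode' s hs).neg
    have hys := hyneg s hs
    have h2' := h1.log (show -y s ≠ 0 by intro h; simp at h; exact absurd h (ne_of_lt hys))
    simpa [neg_div_neg_eq] using h2'
  have hgFTC : ∀ t ∈ Set.Ico (0:ℝ) t₁,
      ∫ s in (0:ℝ)..t, Df s / y s = Real.log (-y t) - Real.log (-y 0) := by
    intro t ht
    apply intervalIntegral.integral_eq_sub_of_hasDerivAt
    · intro s hs
      rw [Set.uIcc_of_le ht.1] at hs
      exact hg s (hsubIcc t ht hs)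
    · apply ContinuousOn.intervalIntegrable
      rw [Set.uIcc_of_le ht.1]
      exact (hDfcont t ht).div (hycont t ht) (hyne t ht)
  set B : ℝ := ∫ x in Set.Ico (0:ℝ) t₁, C' * (k / y x) ^ 2 with hB
  have hintB : IntegrableOn (fun x => C' * (k / y x) ^ 2) (Set.Ico 0 t₁) := hint.const_mul C'
  have hpt : ∀ s ∈ Set.Ico (0:ℝ) t₁, -(Df s / y s) ≤ C' * (k / y s) ^ 2 := by
    intro s hs
    have hys := hyneg s hs
    have hys' : 0 < -y s := by linarith
    have h6 := hDub s hs
    have e1 : -(Df s / y s) = Df s / (-y s) := by rw [div_neg]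
    have e2 : C' * (k / y s) ^ 2 = C / (y s) ^ 2 := by
      rw [hC', div_pow]
      field_simp
    rw [e1, e2]
    calc Df s / (-y s) ≤ (C / (-y s)) / (-y s) :=
          (div_le_div_iff_of_pos_right hys').mpr h6
      _ = C / (y s) ^ 2 := by rw [div_div]; ring_nf
  have key : ∀ t ∈ Set.Ico (0:ℝ) t₁, Real.log M - Real.log (-y t) ≤ B := by
    intro t ht
    have e1 : ∫ s in (0:ℝ)..t, -(Df s / y s) = Real.log (-y 0) - Real.log (-y t) := by
      rw [intervalIntegral.integral_neg, hgFTC t ht]; ring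
    have hIocsub : Set.Ioc (0:ℝ) t ⊆ Set.Ico 0 t₁ :=
      fun s hs => ⟨hs.1.le, lt_of_le_of_lt hs.2 ht.2⟩
    have inta : IntegrableOn (fun s => -(Df s / y s)) (Set.Ioc 0 t) := by
      apply IntegrableOn.mono_set _ (Set.Ioc_subset_Icc_self)
      apply ContinuousOn.integrableOn_Icc
      exact ((hDfcont t ht).div (hycont t ht) (hyne t ht)).neg
    have intb : IntegrableOn (fun s => C' * (k / y s) ^ 2) (Set.Ioc 0 t) :=
      hintB.mono_set hIocsub
    have e2 : (∫ s in (0:ℝ)..t, -(Df s / y s)) ≤ B := by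
      rw [intervalIntegral.integral_of_le ht.1]
      calc ∫ s in Set.Ioc 0 t, -(Df s / y s)
          ≤ ∫ s in Set.Ioc 0 t, C' * (k / y s) ^ 2 := by
            apply setIntegral_mono_on inta intb measurableSet_Ioc
            intro s hs
            exact hpt s (hIocsub hs)
        _ ≤ B := by
            apply setIntegral_mono_set hintB
            · apply Filter.Eventually.of_forall
              intro s
              positivity
            · exact (HasSubset.Subset.eventuallyLE hIocsub)
    rw [e1] at e2
    rw [hM]
    linarith
  set ε : ℝ := Real.exp (Real.log M - B) with hε
  have hεpos : 0 < ε := Real.exp_pos _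
  have hlow : ∀ t ∈ Set.Ico (0:ℝ) t₁, ε ≤ -y t := by
    intro t ht
    have h1 := key t ht
    have h3 : 0 < -y t := by linarith [hyneg t ht]
    calc ε = Real.exp (Real.log M - B) := rfl
      _ ≤ Real.exp (Real.log (-y t)) := Real.exp_le_exp.mpr (by linarith)
      _ = -y t := Real.exp_log h3
  have hyb : Filter.Tendsto (fun n => y (b n)) Filter.atTop (nhds 0) := by
    have hct : ContinuousWithinAt y (Set.Icc 0 t₁) t₁ := hcont t₁ ⟨ht₁.le, le_refl _⟩
    have hbt' : Filter.Tendsto b Filter.atTop (nhdsWithin t₁ (Set.Icc 0 t₁)) :=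
      tendsto_nhdsWithin_of_tendsto_nhds_of_eventually_within b hbt
        (Filter.Eventually.of_forall (fun n => ⟨(hbmem n).1, (hbmem n).2.le⟩))
    have := hct.tendsto.comp hbt'
    rwa [hy1] at this
  have hfin : ε ≤ -0 := by
    apply ge_of_tendsto hyb.neg
    exact Filter.Eventually.of_forall (fun n => hlow (b n) (hbmem n))
  rw [neg_zero] at hfin
  linarith
end
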